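/- arXiv:1907.06227 — 4 statements merged into one kernel-verified Lean document; each statement's English description precedes it below -/
import Mathlib

section
/- For every Φ ∈ ℝ^{N×M} and all indices 1 ≤ i ≤ N, 1 ≤ m ≤ M, the squared Frobenius norm of the entrywise partial derivative of X(Φ)ᴴX(Φ) with respect to the phase Φ_{i,m} satisfies Σ_{p=1}^{M} Σ_{q=1}^{M} |∂(X(Φ)ᴴX(Φ))_{p,q}/∂Φ_{i,m}|² ≤ 2(M−1). -/
open Matrix

noncomputable def Xmat {N M : ℕ} (Φ : Matrix (Fin N) (Fin M) ℝ) : Matrix (Fin N) (Fin M) ℂ :=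
  fun k m => Complex.exp (Complex.I * (Φ k m : ℂ))

def updE {N M : ℕ} (Φ : Matrix (Fin N) (Fin M) ℝ) (i : Fin N) (m : Fin M) (t : ℝ) :
    Matrix (Fin N) (Fin M) ℝ :=
  fun k l => if k = i ∧ l = m then t else Φ k l

lemma exp_affine_hasDerivAt (a b t0 : ℝ) :
    HasDerivAt (fun t : ℝ => Complex.exp (Complex.I * ((a * t + b : ℝ) : ℂ)))
      (Complex.exp (Complex.I * ((a * t0 + b : ℝ) : ℂ)) * (Complex.I * a)) t0 := by
  have h1 : HasDerivAt (fun t : ℝ => a * t + b) a t0 := by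
    simpa using ((hasDerivAt_id t0).const_mul a).add_const b
  have h2 := h1.ofReal_comp
  have h3 := h2.const_mul Complex.I
  simpa [mul_comm] using h3.cexp

lemma key (N M : ℕ) (Φ : Matrix (Fin N) (Fin M) ℝ) (i : Fin N) (m : Fin M)
    (p q : Fin M) :
    ‖deriv (fun t : ℝ =>
        ((Xmat (updE Φ i m t))ᴴ * Xmat (updE Φ i m t)) p q) (Φ i m)‖
      = |((if q = m then (1:ℝ) else 0) - (if p = m then 1 else 0))| := by
  set a : Fin N → ℝ := fun k =>
    (if k = i ∧ q = m then (1:ℝ) else 0) - (if k = i ∧ p = m then 1 else 0) with ha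
  set b : Fin N → ℝ := fun k =>
    (if k = i ∧ q = m then 0 else Φ k q) - (if k = i ∧ p = m then 0 else Φ k p) with hb
  have hfun : (fun t : ℝ =>
      ((Xmat (updE Φ i m t))ᴴ * Xmat (updE Φ i m t)) p q)
      = fun t : ℝ => ∑ k : Fin N, Complex.exp (Complex.I * ((a k * t + b k : ℝ) : ℂ)) := by
    funext t
    rw [Matrix.mul_apply]
    refine Finset.sum_congr rfl fun k _ => ?_
    rw [Matrix.conjTranspose_apply]
    simp only [Xmat]
    rw [Complex.star_def, ← Complex.exp_conj, ← Complex.exp_add]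
    congr 1
    have : (starRingEnd ℂ) (Complex.I * ((updE Φ i m t k p : ℝ) : ℂ))
        = -Complex.I * ((updE Φ i m t k p : ℝ) : ℂ) := by
      simp [Complex.conj_ofReal]
    rw [this]
    have harg : a k * t + b k = updE Φ i m t k q - updE Φ i m t k p := by
      simp only [ha, hb, updE]
      by_cases hk : k = i <;> by_cases hp : p = m <;> by_cases hq : q = m <;>
        simp [hk, hp, hq] <;> ring
    rw [harg]
    push_cast
    ring
  have hderiv : HasDerivAt (fun t : ℝ =>
      ((Xmat (updE Φ i m t))ᴴ * Xmat (updE Φ i m t)) p q)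
      (∑ k : Fin N, Complex.exp (Complex.I * ((a k * (Φ i m) + b k : ℝ) : ℂ)) * (Complex.I * a k))
      (Φ i m) := by
    rw [hfun]
    exact HasDerivAt.fun_sum fun k _ => exp_affine_hasDerivAt (a k) (b k) (Φ i m)
  rw [hderiv.deriv]
  have hsum : (∑ k : Fin N, Complex.exp (Complex.I * ((a k * (Φ i m) + b k : ℝ) : ℂ))
      * (Complex.I * a k))
      = Complex.exp (Complex.I * ((a i * (Φ i m) + b i : ℝ) : ℂ)) * (Complex.I * a i) := by
    refine Finset.sum_eq_single i (fun k _ hk => ?_) (by simp)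
    have : a k = 0 := by simp [ha, hk]
    simp [this]
  rw [hsum]
  rw [norm_mul, norm_mul]
  have h1 : ‖Complex.exp (Complex.I * ((a i * (Φ i m) + b i : ℝ) : ℂ))‖ = 1 := by
    rw [mul_comm]
    exact Complex.norm_exp_ofReal_mul_I _
  rw [h1, Complex.norm_I, Complex.norm_real]
  simp [ha]

/-- The squared Frobenius norm of the entrywise partial derivative of `X(Φ)ᴴX(Φ)`
with respect to `Φ_{i,m}` is bounded by `2(M−1)`. -/
theorem stmt5 (N M : ℕ) (hN : 1 ≤ N) (hM : 1 ≤ M)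
    (Φ : Matrix (Fin N) (Fin M) ℝ) (i : Fin N) (m : Fin M) :
    ∑ p : Fin M, ∑ q : Fin M,
      ‖deriv (fun t : ℝ =>
        ((Xmat (updE Φ i m t))ᴴ * Xmat (updE Φ i m t)) p q) (Φ i m)‖ ^ 2
      ≤ 2 * ((M : ℝ) - 1) := by
  have hkey : ∀ p q : Fin M,
      ‖deriv (fun t : ℝ =>
        ((Xmat (updE Φ i m t))ᴴ * Xmat (updE Φ i m t)) p q) (Φ i m)‖ ^ 2
      = ((if q = m then (1:ℝ) else 0) - (if p = m then 1 else 0)) ^ 2 := by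
    intro p q
    rw [key, sq_abs]
  calc ∑ p : Fin M, ∑ q : Fin M,
      ‖deriv (fun t : ℝ =>
        ((Xmat (updE Φ i m t))ᴴ * Xmat (updE Φ i m t)) p q) (Φ i m)‖ ^ 2
      = ∑ p : Fin M, ∑ q : Fin M,
        ((if q = m then (1:ℝ) else 0) - (if p = m then 1 else 0)) ^ 2 := by
        exact Finset.sum_congr rfl fun p _ => Finset.sum_congr rfl fun q _ => hkey p q
    _ ≤ 2 * ((M : ℝ) - 1) := by
        have inner : ∀ p : Fin M, ∑ q : Fin M,
            ((if q = m then (1:ℝ) else 0) - (if p = m then 1 else 0)) ^ 2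
            = if p = m then (M : ℝ) - 1 else 1 := by
          intro p
          by_cases hp : p = m
          · simp only [hp, if_pos]
            have : ∀ q : Fin M, ((if q = m then (1:ℝ) else 0) - 1) ^ 2
                = 1 - (if q = m then (1:ℝ) else 0) := by
              intro q; by_cases hq : q = m <;> simp [hq]
            rw [Finset.sum_congr rfl fun q _ => this q, Finset.sum_sub_distrib]
            simp [Finset.sum_ite_eq', Finset.card_univ]
          · simp only [hp, if_neg, not_false_iff, sub_zero]
            have : ∀ q : Fin M, ((if q = m then (1:ℝ) else 0)) ^ 2
                = (if q = m then (1:ℝ) else 0) := by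
              intro q; by_cases hq : q = m <;> simp [hq]
            rw [Finset.sum_congr rfl fun q _ => this q]
            simp [Finset.sum_ite_eq']
        rw [Finset.sum_congr rfl fun p _ => inner p]
        have : ∀ p : Fin M, (if p = m then (M : ℝ) - 1 else 1)
            = 1 + (if p = m then (M : ℝ) - 2 else 0) := by
          intro p; by_cases hp : p = m <;> simp [hp] <;> ring
        rw [Finset.sum_congr rfl fun p _ => this p, Finset.sum_add_distrib]
        simp only [Finset.sum_const, Finset.card_univ, Fintype.card_fin, nsmul_eq_mul,
          mul_one, Finset.sum_ite_eq', Finset.mem_univ, if_pos]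
        have : (1:ℝ) ≤ M := by exact_mod_cast hM
        nlinarith
end

section
/- Let f_0(Φ) = ‖X(Φ)ᴴX(Φ) − N·I‖_F². Then for every Φ ∈ ℝ^{N×M} and all indices 1 ≤ i ≤ N, 1 ≤ m ≤ M, the second partial derivative of f_0 with respect to the single phase variable Φ_{i,m} satisfies |∂²f_0(Φ)/∂Φ_{i,m}²| ≤ 4(M−1)(N+1). -/
open Matrix

/-- Squared Frobenius norm of a complex matrix. -/
noncomputable def frobSq {m n : Type*} [Fintype m] [Fintype n] (A : Matrix m n ℂ) : ℝ :=
  ∑ i, ∑ j, ‖A i j‖ ^ 2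

/-- `f_0(Φ) = ‖X(Φ)ᴴX(Φ) − N·I‖_F²`. -/
noncomputable def f0 (N M : ℕ) (Φ : Matrix (Fin N) (Fin M) ℝ) : ℝ :=
  frobSq ((Xmat Φ)ᴴ * Xmat Φ - (N : ℂ) • (1 : Matrix (Fin M) (Fin M) ℂ))

/-- the constant (in `t`) part `a_l` of the Gram entry `G_{m,l}`. -/
noncomputable def aA {N M : ℕ} (Φ : Matrix (Fin N) (Fin M) ℝ) (i : Fin N) (m : Fin M)
    (l : Fin M) : ℂ :=
  ∑ k ∈ Finset.univ.erase i, (starRingEnd ℂ) (Xmat Φ k m) * Xmat Φ k l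

noncomputable def bB {N M : ℕ} (Φ : Matrix (Fin N) (Fin M) ℝ) (i : Fin N) (m : Fin M) : ℂ :=
  ∑ l ∈ Finset.univ.erase m, 4 * (Xmat Φ i l * (starRingEnd ℂ) (aA Φ i m l))

noncomputable def cC {N M : ℕ} (Φ : Matrix (Fin N) (Fin M) ℝ) (i : Fin N) (m : Fin M) : ℝ :=
  (∑ l ∈ Finset.univ.erase m, ∑ l' ∈ Finset.univ.erase m,
      Complex.normSq ((∑ k, (starRingEnd ℂ) (Xmat Φ k l) * Xmat Φ k l')
        - if l = l' then (N : ℂ) else 0))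
    + (∑ l ∈ Finset.univ.erase m, (1 + Complex.normSq (aA Φ i m l))
    + ∑ l ∈ Finset.univ.erase m, (1 + Complex.normSq (aA Φ i m l)))

lemma conj_mul_self_exp (θ : ℝ) :
    (starRingEnd ℂ) (Complex.exp (Complex.I * θ)) * Complex.exp (Complex.I * θ) = 1 := by
  rw [← Complex.exp_conj, ← Complex.exp_add]
  simp

lemma normSq_exp_I (θ : ℝ) : Complex.normSq (Complex.exp (Complex.I * θ)) = 1 := by
  rw [Complex.normSq_eq_norm_sq]
  simp [Complex.norm_exp]

lemma normSq_exp_negI (t : ℝ) : Complex.normSq (Complex.exp (-(Complex.I * t))) = 1 := by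
  rw [Complex.normSq_eq_norm_sq]
  simp [Complex.norm_exp]

lemma key_s7 {N M : ℕ} (Φ : Matrix (Fin N) (Fin M) ℝ) (i : Fin N) (m : Fin M) (t : ℝ) :
    f0 N M (updE Φ i m t) =
      cC Φ i m + (Complex.exp (-(Complex.I * t)) * bB Φ i m).re := by
  classical
  set Ψ := updE Φ i m t with hΨ
  have hXne : ∀ k l, ¬(k = i ∧ l = m) → Xmat Ψ k l = Xmat Φ k l := by
    intro k l h
    simp [Xmat, hΨ, updE, if_neg h]
  have hXim : Xmat Ψ i m = Complex.exp (Complex.I * t) := by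
    simp [Xmat, hΨ, updE]
  -- entries
  set g : Fin M → Fin M → ℝ := fun l l' =>
    Complex.normSq ((∑ k, (starRingEnd ℂ) (Xmat Ψ k l) * Xmat Ψ k l')
      - if l = l' then (N : ℂ) else 0) with hg
  have hf0 : f0 N M Ψ = ∑ l, ∑ l', g l l' := by
    unfold f0 frobSq
    refine Finset.sum_congr rfl fun l _ => Finset.sum_congr rfl fun l' _ => ?_
    rw [Complex.sq_norm, hg]
    congr 1
    simp [Matrix.sub_apply, Matrix.mul_apply, Matrix.conjTranspose_apply,
      Matrix.smul_apply, Matrix.one_apply, mul_comm]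
  have split : ∀ h : Fin M → ℝ, ∑ l', h l' = h m + ∑ l' ∈ Finset.univ.erase m, h l' :=
    fun h => (Finset.add_sum_erase _ _ (Finset.mem_univ m)).symm
  -- value of g m m
  have hgmm : g m m = 0 := by
    rw [hg]
    have h1 : ∀ k : Fin N, (starRingEnd ℂ) (Xmat Ψ k m) * Xmat Ψ k m = 1 := by
      intro k; exact conj_mul_self_exp (Ψ k m)
    simp [h1, Finset.sum_const]
  -- the Gram entry G_{m,l} for l ≠ m
  have hGml : ∀ l, l ≠ m →
      (∑ k, (starRingEnd ℂ) (Xmat Ψ k m) * Xmat Ψ k l)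
        = Complex.exp (-(Complex.I * t)) * Xmat Φ i l + aA Φ i m l := by
    intro l hl
    rw [← Finset.add_sum_erase _ _ (Finset.mem_univ i)]
    congr 1
    · rw [hXim, hXne i l (by tauto), ← Complex.exp_conj]
      congr 1
      simp
    · rw [aA]
      refine Finset.sum_congr rfl fun k hk => ?_
      have hki : k ≠ i := Finset.ne_of_mem_erase hk
      rw [hXne k m (by tauto), hXne k l (by tauto)]
  have hgml : ∀ l, l ≠ m →
      g m l = (1 + Complex.normSq (aA Φ i m l))
        + 2 * ((Complex.exp (-(Complex.I * t)) * Xmat Φ i l)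
            * (starRingEnd ℂ) (aA Φ i m l)).re := by
    intro l hl
    rw [hg]
    simp only [if_neg (Ne.symm hl)]
    rw [sub_zero, hGml l hl, Complex.normSq_add, Complex.normSq_mul, normSq_exp_negI,
      show Complex.normSq (Xmat Φ i l) = 1 from normSq_exp_I (Φ i l)]
    ring
  have hglm : ∀ l, l ≠ m → g l m = g m l := by
    intro l hl
    rw [hg]
    simp only [if_neg hl, if_neg (Ne.symm hl), sub_zero]
    rw [← Complex.normSq_conj]
    congr 1
    rw [map_sum]
    refine Finset.sum_congr rfl fun k _ => ?_
    simp [mul_comm]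
  have hgll : ∀ l l', l ≠ m → l' ≠ m →
      g l l' = Complex.normSq ((∑ k, (starRingEnd ℂ) (Xmat Φ k l) * Xmat Φ k l')
        - if l = l' then (N : ℂ) else 0) := by
    intro l l' hl hl'
    have hsum : (∑ k, (starRingEnd ℂ) (Xmat Ψ k l) * Xmat Ψ k l')
        = ∑ k, (starRingEnd ℂ) (Xmat Φ k l) * Xmat Φ k l' :=
      Finset.sum_congr rfl fun k _ => by
        rw [hXne k l (by tauto), hXne k l' (by tauto)]
    rw [hg]
    dsimp only
    rw [hsum]
  -- assemble
  rw [hf0, split (fun l => ∑ l', g l l'), split (fun l' => g m l'), hgmm]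
  have hrow : ∀ l ∈ Finset.univ.erase m, (∑ l', g l l') = g l m + ∑ l' ∈ Finset.univ.erase m, g l l' :=
    fun l _ => split _
  rw [Finset.sum_congr rfl hrow]
  have hb : (Complex.exp (-(Complex.I * t)) * bB Φ i m).re
      = ∑ l ∈ Finset.univ.erase m,
          (2 * ((Complex.exp (-(Complex.I * t)) * Xmat Φ i l)
            * (starRingEnd ℂ) (aA Φ i m l)).re
          + 2 * ((Complex.exp (-(Complex.I * t)) * Xmat Φ i l)
            * (starRingEnd ℂ) (aA Φ i m l)).re) := by
    rw [bB, Finset.mul_sum, Complex.re_sum]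
    refine Finset.sum_congr rfl fun l _ => ?_
    have : Complex.exp (-(Complex.I * t)) * (4 * (Xmat Φ i l * (starRingEnd ℂ) (aA Φ i m l)))
        = ((4 : ℝ) : ℂ) * ((Complex.exp (-(Complex.I * t)) * Xmat Φ i l)
            * (starRingEnd ℂ) (aA Φ i m l)) := by
      push_cast; ring
    rw [this, Complex.re_ofReal_mul]
    ring
  rw [hb, cC]
  rw [Finset.sum_congr rfl (fun l hl => hgml l (Finset.ne_of_mem_erase hl))]
  have hrow2 : ∀ l ∈ Finset.univ.erase m,
      g l m + ∑ l' ∈ Finset.univ.erase m, g l l'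
      = ((1 + Complex.normSq (aA Φ i m l))
          + 2 * ((Complex.exp (-(Complex.I * t)) * Xmat Φ i l)
              * (starRingEnd ℂ) (aA Φ i m l)).re)
        + ∑ l' ∈ Finset.univ.erase m,
            Complex.normSq ((∑ k, (starRingEnd ℂ) (Xmat Φ k l) * Xmat Φ k l')
              - if l = l' then (N : ℂ) else 0) := by
    intro l hl
    have hlm' := Finset.ne_of_mem_erase hl
    rw [hglm l hlm', hgml l hlm']
    congr 1
    exact Finset.sum_congr rfl fun l' hl' => hgll l l' hlm' (Finset.ne_of_mem_erase hl')
  rw [Finset.sum_congr rfl hrow2]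
  simp only [Finset.sum_add_distrib]
  ring

/-- The second partial derivative of `f_0` with respect to the single phase variable
`Φ_{i,m}` is bounded in absolute value by `4(M−1)(N+1)`. -/
theorem stmt7 (N M : ℕ) (hN : 1 ≤ N) (hM : 1 ≤ M)
    (Φ : Matrix (Fin N) (Fin M) ℝ) (i : Fin N) (m : Fin M) :
    |deriv (deriv (fun t : ℝ => f0 N M (updE Φ i m t))) (Φ i m)|
      ≤ 4 * ((M : ℝ) - 1) * ((N : ℝ) + 1) := by
  classical
  have habsX : ∀ (k : Fin N) (l : Fin M), ‖Xmat Φ k l‖ = 1 := by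
    intro k l; simp [Xmat, Complex.norm_exp]
  have habsA : ∀ l : Fin M, ‖aA Φ i m l‖ ≤ (N : ℝ) - 1 := by
    intro l
    calc ‖aA Φ i m l‖
        ≤ ∑ k ∈ Finset.univ.erase i,
            ‖(starRingEnd ℂ) (Xmat Φ k m) * Xmat Φ k l‖ :=
          norm_sum_le _ _
      _ = ∑ k ∈ Finset.univ.erase i, 1 := by
          refine Finset.sum_congr rfl fun k _ => ?_
          rw [norm_mul, Complex.norm_conj, habsX, habsX, mul_one]
      _ = (N : ℝ) - 1 := by
          rw [Finset.sum_const, Finset.card_erase_of_mem (Finset.mem_univ i),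
            Finset.card_univ, Fintype.card_fin]
          rw [nsmul_eq_mul, mul_one, Nat.cast_sub hN, Nat.cast_one]
  have habsB : ‖bB Φ i m‖ ≤ 4 * ((M : ℝ) - 1) * ((N : ℝ) - 1) := by
    calc ‖bB Φ i m‖
        ≤ ∑ l ∈ Finset.univ.erase m,
            ‖4 * (Xmat Φ i l * (starRingEnd ℂ) (aA Φ i m l))‖ :=
          norm_sum_le _ _
      _ ≤ ∑ l ∈ Finset.univ.erase m, 4 * ((N : ℝ) - 1) := by
          refine Finset.sum_le_sum fun l _ => ?_
          rw [norm_mul, norm_mul, habsX, Complex.norm_conj]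
          have h4 : ‖(4 : ℂ)‖ = 4 := by norm_num [Complex.norm_ofNat]
          rw [h4, one_mul]
          have := habsA l
          nlinarith [norm_nonneg (aA Φ i m l)]
      _ = 4 * ((M : ℝ) - 1) * ((N : ℝ) - 1) := by
          rw [Finset.sum_const, Finset.card_erase_of_mem (Finset.mem_univ m),
            Finset.card_univ, Fintype.card_fin, nsmul_eq_mul,
            Nat.cast_sub hM, Nat.cast_one]
          ring
  have hF : (fun t : ℝ => f0 N M (updE Φ i m t))
      = fun t : ℝ => cC Φ i m + (Complex.exp (-(Complex.I * t)) * bB Φ i m).re :=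
    funext (key_s7 Φ i m)
  rw [hF]
  set b := bB Φ i m with hbdef
  have hder1 : deriv (fun t : ℝ => cC Φ i m + (Complex.exp (-(Complex.I * t)) * b).re)
      = fun t : ℝ => (Complex.exp (-(Complex.I * t)) * (-Complex.I * b)).re := by
    funext t
    have h0 : HasDerivAt (fun z : ℂ => -(Complex.I * z)) (-Complex.I) (t : ℂ) := by
      simpa using ((hasDerivAt_id (t : ℂ)).const_mul Complex.I).fun_neg
    have h1 : HasDerivAt (fun z : ℂ => Complex.exp (-(Complex.I * z)) * b)
        (Complex.exp (-(Complex.I * t)) * (-Complex.I * b)) (t : ℂ) := by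
      have h2 := (h0.cexp).mul_const b
      exact h2.congr_deriv (by ring)
    exact ((h1.real_of_complex).const_add (cC Φ i m)).deriv
  rw [hder1]
  set t0 := Φ i m with ht0
  have h0 : HasDerivAt (fun z : ℂ => -(Complex.I * z)) (-Complex.I) (t0 : ℂ) := by
    simpa using ((hasDerivAt_id (t0 : ℂ)).const_mul Complex.I).fun_neg
  have h1 : HasDerivAt (fun z : ℂ => Complex.exp (-(Complex.I * z)) * (-Complex.I * b))
      (Complex.exp (-(Complex.I * t0)) * (-b)) (t0 : ℂ) := by
    have h2 := (h0.cexp).mul_const (-Complex.I * b)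
    refine h2.congr_deriv ?_
    have : Complex.I * Complex.I = -1 := Complex.I_mul_I
    linear_combination (Complex.exp (-(Complex.I * (t0 : ℂ))) * b) * this
  have h2 := h1.real_of_complex
  rw [h2.deriv]
  calc |(Complex.exp (-(Complex.I * (t0 : ℂ))) * (-b)).re|
      ≤ ‖Complex.exp (-(Complex.I * (t0 : ℂ))) * (-b)‖ :=
        Complex.abs_re_le_norm _
    _ = ‖b‖ := by
        rw [norm_mul, norm_neg, Complex.norm_exp]
        simp
    _ ≤ 4 * ((M : ℝ) - 1) * ((N : ℝ) - 1) := habsB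
    _ ≤ 4 * ((M : ℝ) - 1) * ((N : ℝ) + 1) := by
        have hM1 : (1 : ℝ) ≤ (M : ℝ) := by exact_mod_cast hM
        nlinarith
end

section
/- (Lemma 5 / lower bound of the augmented Lagrangian term) Let f : ℝ^{N×M} → ℝ be differentiable with L-Lipschitz gradient (L ≥ 0) and let ρ > 0. If Λ = −∇f(Φ) − L(Ψ − Φ), then f(Ψ) + ⟨Λ, Ψ − Φ⟩ + (ρ/2)‖Ψ − Φ‖_F² ≥ f(Φ) + ((ρ − 5L)/2)‖Ψ − Φ‖_F². In particular, if moreover f ≥ 0 on ℝ^{N×M} and ρ ≥ 5L, then f(Ψ) + ⟨Λ, Ψ − Φ⟩ + (ρ/2)‖Ψ − Φ‖_F² ≥ 0. -/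
set_option maxHeartbeats 1000000


open scoped RealInnerProductSpace

/-- (Lemma 5) Lower bound of the augmented Lagrangian term: if `f` has an `L`-Lipschitz
gradient, `ρ > 0`, and `Λ = −∇f(Φ) − L(Ψ − Φ)`, then
`f(Ψ) + ⟨Λ, Ψ − Φ⟩ + (ρ/2)‖Ψ − Φ‖² ≥ f(Φ) + ((ρ − 5L)/2)‖Ψ − Φ‖²`; in particular if
moreover `f ≥ 0` and `ρ ≥ 5L` then the left-hand side is nonnegative. -/
theorem stmt12 (N M : ℕ)
    (f : EuclideanSpace ℝ (Fin N × Fin M) → ℝ) (L ρ : ℝ) (hL : 0 ≤ L) (hρ : 0 < ρ)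
    (hdiff : Differentiable ℝ f)
    (hLip : ∀ x y : EuclideanSpace ℝ (Fin N × Fin M),
      ‖gradient f x - gradient f y‖ ≤ L * ‖x - y‖)
    (Φ Ψ Λ : EuclideanSpace ℝ (Fin N × Fin M))
    (hΛ : Λ = -gradient f Φ - L • (Ψ - Φ)) :
    (f Ψ + ⟪Λ, Ψ - Φ⟫ + ρ / 2 * ‖Ψ - Φ‖ ^ 2 ≥
      f Φ + (ρ - 5 * L) / 2 * ‖Ψ - Φ‖ ^ 2) ∧
    ((∀ x, 0 ≤ f x) → 5 * L ≤ ρ →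
      0 ≤ f Ψ + ⟪Λ, Ψ - Φ⟫ + ρ / 2 * ‖Ψ - Φ‖ ^ 2) := by
  set G := gradient f Φ with hG
  set D : EuclideanSpace ℝ (Fin N × Fin M) →L[ℝ] ℝ :=
    InnerProductSpace.toDual ℝ _ G with hD
  have hfderivΦ : fderiv ℝ f Φ = D := by
    rw [hD, hG, gradient, LinearIsometryEquiv.apply_symm_apply]
  have hfg : ∀ x, fderiv ℝ (fun y => f y - D y) x = fderiv ℝ f x - D := by
    intro x
    rw [fderiv_fun_sub (hdiff x) (D.differentiable x), D.fderiv]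
  have hbound : ∀ x ∈ segment ℝ Φ Ψ,
      ‖fderiv ℝ (fun y => f y - D y) x‖ ≤ L * ‖Ψ - Φ‖ := by
    intro x hx
    rw [hfg, ← hfderivΦ]
    have h1 : ‖fderiv ℝ f x - fderiv ℝ f Φ‖ = ‖gradient f x - gradient f Φ‖ := by
      have h2 : gradient f x - gradient f Φ =
          (InnerProductSpace.toDual ℝ _).symm (fderiv ℝ f x - fderiv ℝ f Φ) := by
        simp [gradient, map_sub]
      rw [h2, LinearIsometryEquiv.norm_map]
    rw [h1, ← hG]
    refine (hLip x Φ).trans (mul_le_mul_of_nonneg_left ?_ hL)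
    obtain ⟨a, b, ha, hb, hab, rfl⟩ := hx
    have h3 : a • Φ + b • Ψ - Φ = b • (Ψ - Φ) := by
      rw [smul_sub]
      have : a • Φ = Φ - b • Φ := by
        rw [eq_sub_iff_add_eq, ← add_smul, hab, one_smul]
      rw [this]; abel
    rw [h3, norm_smul]
    calc ‖b‖ * ‖Ψ - Φ‖ ≤ 1 * ‖Ψ - Φ‖ := by
          apply mul_le_mul_of_nonneg_right _ (norm_nonneg _)
          rw [Real.norm_eq_abs, abs_of_nonneg hb]; linarith
      _ = ‖Ψ - Φ‖ := one_mul _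
  have key : ‖(f Ψ - D Ψ) - (f Φ - D Φ)‖ ≤ L * ‖Ψ - Φ‖ * ‖Ψ - Φ‖ :=
    (convex_segment Φ Ψ).norm_image_sub_le_of_norm_fderiv_le
      (fun x _ => (hdiff x).sub (D.differentiable x)) hbound
      (left_mem_segment ℝ Φ Ψ) (right_mem_segment ℝ Φ Ψ)
  have hDval : ∀ x, D x = ⟪G, x⟫ := fun x => by
    rw [hD, InnerProductSpace.toDual_apply_apply]
  have hlow : f Φ + ⟪G, Ψ - Φ⟫ - L * ‖Ψ - Φ‖ ^ 2 ≤ f Ψ := by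
    have h4 := neg_le_of_abs_le
      (by rwa [← Real.norm_eq_abs] :
        |(f Ψ - D Ψ) - (f Φ - D Φ)| ≤ L * ‖Ψ - Φ‖ * ‖Ψ - Φ‖)
    have h5 : ⟪G, Ψ - Φ⟫ = D Ψ - D Φ := by
      simp only [hDval, inner_sub_right]
    nlinarith [sq_nonneg ‖Ψ - Φ‖]
  have hinner : ⟪Λ, Ψ - Φ⟫ = -⟪G, Ψ - Φ⟫ - L * ‖Ψ - Φ‖ ^ 2 := by
    rw [hΛ]
    rw [inner_sub_left, inner_neg_left, real_inner_smul_left,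
      real_inner_self_eq_norm_sq]
  have main : f Ψ + ⟪Λ, Ψ - Φ⟫ + ρ / 2 * ‖Ψ - Φ‖ ^ 2 ≥
      f Φ + (ρ - 5 * L) / 2 * ‖Ψ - Φ‖ ^ 2 := by
    rw [hinner]
    nlinarith [sq_nonneg ‖Ψ - Φ‖]
  refine ⟨main, fun hf hρL => ?_⟩
  have h6 : 0 ≤ (ρ - 5 * L) / 2 * ‖Ψ - Φ‖ ^ 2 := by
    apply mul_nonneg _ (sq_nonneg _)
    linarith
  linarith [main, hf Φ]
end

section
/- (Theorem 2, limit points of consensus-PDMM are stationary) Assume M ≥ 2. For each n ∈ T let L_n > 0 be such that ∇f_n is L_n-Lipschitz, and let ρ_n ≥ 9L_n for n ∈ T∖{0}. Let C = [0, 2π]^{N×M} and let sequences (Φᵏ)_{k≥1} ⊆ C, (Φ_nᵏ)_{k≥1}, (Λ_nᵏ)_{k≥1} (n ∈ T∖{0}) satisfy, for all k ≥ 1: (i) Φ^{k+1} is a minimizer over C of Φ ↦ ⟨∇f_0(Φᵏ), Φ − Φᵏ⟩ + (L_0/2)‖Φ − Φᵏ‖_F² + Σ_{n∈T∖{0}}[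 ⟨Λ_nᵏ, Φ_nᵏ − Φ⟩ + (ρ_n/2)‖Φ_nᵏ − Φ‖_F² ]; (ii) Φ_n^{k+1} = (L_n Φ_nᵏ + ρ_n Φᵏ − Λ_nᵏ − ∇f_n(Φ_nᵏ))/(L_n + ρ_n); (iii) Λ_n^{k+1} = Λ_nᵏ + ρ_n(Φ_n^{k+1} − Φᵏ). If the sequences converge, i.e., Φᵏ → Φ*, Φ_nᵏ → Φ_n*, Λ_nᵏ → Λ_n* with Φ_n* = Φ* for every n ∈ T∖{0}, then Φ* is a stationary point of the constrained problem: ⟨Σ_{n∈T} ∇f_n(Φ*), Φ − Φ*⟩ ≥ 0 for all Φ ∈ C. -/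
open Matrix Filter
open scoped RealInnerProductSpace
open Real

/-- The `N × N` shift matrix `S_n`: `(S_n)_{k,l} = 1` if `k - l = n` and `0` otherwise. -/
noncomputable def Smat (N : ℕ) (n : ℤ) : Matrix (Fin N) (Fin N) ℂ :=
  fun k l => if ((k : ℕ) : ℤ) - ((l : ℕ) : ℤ) = n then 1 else 0

/-- `ℝ^{N×M}` with the Frobenius inner product. -/
abbrev FrobSpace (N M : ℕ) := EuclideanSpace ℝ (Fin N × Fin M)

/-- The unimodular matrix `X(Φ)` with entries `exp(i Φ_{k,m})`. -/
noncomputable def XmatE {N M : ℕ} (Φ : FrobSpace N M) : Matrix (Fin N) (Fin M) ℂ :=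
  fun k m => Complex.exp (Complex.I * (Φ (k, m) : ℂ))

/-- `f_n(Φ) = ‖X(Φ)ᴴ S_n X(Φ) − N δ_n I‖_F²`. -/
noncomputable def fnE (N M : ℕ) (n : ℤ) (Φ : FrobSpace N M) : ℝ :=
  frobSq ((XmatE Φ)ᴴ * Smat N n * XmatE Φ -
    if n = 0 then (N : ℂ) • (1 : Matrix (Fin M) (Fin M) ℂ) else 0)

/-- The box `C = [0, 2π]^{N×M}`. -/
def Cbox (N M : ℕ) : Set (FrobSpace N M) := {Φ | ∀ p, Φ p ∈ Set.Icc 0 (2 * π)}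

/-- (Theorem 2) If the consensus-PDMM iterates converge, with `Φ_n* = Φ*` for all
`n ∈ T∖{0}`, then the limit `Φ*` is a stationary point of `min Σ_{n∈T} f_n` over `C`. -/
theorem stmt15 (N M : ℕ) (hN : 1 ≤ N) (hM : 2 ≤ M)
    (T : Finset ℤ) (hT : T ⊆ Finset.Icc (-((N : ℤ) - 1)) ((N : ℤ) - 1)) (h0 : (0 : ℤ) ∈ T)
    (L ρ : ℤ → ℝ)
    (hL : ∀ n ∈ T, 0 < L n)
    (hLip : ∀ n ∈ T, ∀ Φ Φ' : FrobSpace N M,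
      ‖gradient (fnE N M n) Φ - gradient (fnE N M n) Φ'‖ ≤ L n * ‖Φ - Φ'‖)
    (hρ : ∀ n ∈ T.erase 0, 9 * L n ≤ ρ n)
    (Φs : ℕ → FrobSpace N M) (Φns Λns : ℤ → ℕ → FrobSpace N M)
    (hC : ∀ k, Φs k ∈ Cbox N M)
    (hmin : ∀ k, ∀ Φ ∈ Cbox N M,
      (⟪gradient (fnE N M 0) (Φs k), Φs (k + 1) - Φs k⟫ +
          L 0 / 2 * ‖Φs (k + 1) - Φs k‖ ^ 2 +
          ∑ n ∈ T.erase 0, (⟪Λns n k, Φns n k - Φs (k + 1)⟫ +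
            ρ n / 2 * ‖Φns n k - Φs (k + 1)‖ ^ 2)) ≤
        (⟪gradient (fnE N M 0) (Φs k), Φ - Φs k⟫ +
          L 0 / 2 * ‖Φ - Φs k‖ ^ 2 +
          ∑ n ∈ T.erase 0, (⟪Λns n k, Φns n k - Φ⟫ +
            ρ n / 2 * ‖Φns n k - Φ‖ ^ 2)))
    (hupd : ∀ k, ∀ n ∈ T.erase 0,
      Φns n (k + 1) = (L n + ρ n)⁻¹ •
        (L n • Φns n k + ρ n • Φs k - Λns n k - gradient (fnE N M n) (Φns n k)))
    (hΛ : ∀ k, ∀ n ∈ T.erase 0,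
      Λns n (k + 1) = Λns n k + ρ n • (Φns n (k + 1) - Φs k))
    (Φstar : FrobSpace N M) (Φnstar Λnstar : ℤ → FrobSpace N M)
    (hconv : Tendsto Φs atTop (nhds Φstar))
    (hconvn : ∀ n ∈ T.erase 0, Tendsto (Φns n) atTop (nhds (Φnstar n)))
    (hconvΛ : ∀ n ∈ T.erase 0, Tendsto (Λns n) atTop (nhds (Λnstar n)))
    (heq : ∀ n ∈ T.erase 0, Φnstar n = Φstar) :
    ∀ Φ ∈ Cbox N M, 0 ≤ ⟪∑ n ∈ T, gradient (fnE N M n) Φstar, Φ - Φstar⟫ := by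
  classical
  set G : ℤ → FrobSpace N M → FrobSpace N M := fun n => gradient (fnE N M n) with hG
  have hmemT : ∀ n ∈ T.erase 0, n ∈ T := fun n hn => Finset.mem_of_mem_erase hn
  have gcont : ∀ n ∈ T, Continuous (G n) := by
    intro n hn
    have hlip : LipschitzWith (L n).toNNReal (G n) := by
      apply LipschitzWith.of_dist_le_mul
      intro x y
      rw [dist_eq_norm, dist_eq_norm, Real.coe_toNNReal _ (hL n hn).le]
      exact hLip n hn x y
    exact hlip.continuous
  have hρpos : ∀ n ∈ T.erase 0, 0 < ρ n := fun n hn =>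
    lt_of_lt_of_le (by have := hL n (hmemT n hn); linarith) (hρ n hn)
  -- Φstar belongs to the box
  have hCstar : Φstar ∈ Cbox N M := by
    intro p
    have hp : Tendsto (fun k => Φs k p) atTop (nhds (Φstar p)) := by
      have := ((EuclideanSpace.proj p).continuous.tendsto Φstar).comp hconv
      simpa [Function.comp_def] using this
    exact ⟨ge_of_tendsto' hp (fun k => (hC k p).1),
      le_of_tendsto' hp (fun k => (hC k p).2)⟩
  -- the limit multipliers are the negative gradients
  have hΛstar : ∀ n ∈ T.erase 0, Λnstar n = -(G n Φstar) := by
    intro n hn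
    have hLρ : L n + ρ n ≠ 0 := by
      have := hL n (hmemT n hn); have := hρpos n hn; intro h; linarith
    have hφn : Tendsto (Φns n) atTop (nhds Φstar) := by
      rw [← heq n hn]; exact hconvn n hn
    have h1 : Tendsto (fun k => Φns n (k + 1)) atTop (nhds Φstar) :=
      hφn.comp (tendsto_add_atTop_nat 1)
    have hgn : Tendsto (fun k => G n (Φns n k)) atTop (nhds (G n Φstar)) :=
      ((gcont n (hmemT n hn)).tendsto Φstar).comp hφn
    have h2 : Tendsto
        (fun k => (L n + ρ n)⁻¹ •
          (L n • Φns n k + ρ n • Φs k - Λns n k - G n (Φns n k))) atTop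
        (nhds ((L n + ρ n)⁻¹ •
          (L n • Φstar + ρ n • Φstar - Λnstar n - G n Φstar))) :=
      (((((hφn.const_smul (L n)).add (hconv.const_smul (ρ n))).sub
        (hconvΛ n hn)).sub hgn)).const_smul _
    have h1' : Tendsto
        (fun k => (L n + ρ n)⁻¹ •
          (L n • Φns n k + ρ n • Φs k - Λns n k - G n (Φns n k))) atTop
        (nhds Φstar) := by
      have hfe : (fun k => Φns n (k + 1)) =
          fun k => (L n + ρ n)⁻¹ •
            (L n • Φns n k + ρ n • Φs k - Λns n k - G n (Φns n k)) :=
        funext fun k => hupd k n hn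
      rw [← hfe]; exact h1
    have heq2 : Φstar = (L n + ρ n)⁻¹ •
        (L n • Φstar + ρ n • Φstar - Λnstar n - G n Φstar) :=
      tendsto_nhds_unique h1' h2
    have h3 : (L n + ρ n) • Φstar =
        L n • Φstar + ρ n • Φstar - Λnstar n - G n Φstar := by
      conv_lhs => rw [heq2]
      rw [smul_inv_smul₀ hLρ]
    rw [add_smul] at h3
    have h5 : Λnstar n + G n Φstar = 0 := by
      rw [sub_sub, eq_sub_iff_add_eq] at h3
      exact add_eq_left.mp h3
    exact eq_neg_of_add_eq_zero_left h5
  set c : ℝ := L 0 / 2 + ∑ n ∈ T.erase 0, ρ n / 2 with hc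
  -- key inequality from the limit of the minimization step
  have hkey : ∀ Φ ∈ Cbox N M,
      0 ≤ ⟪∑ n ∈ T, G n Φstar, Φ - Φstar⟫ + c * ‖Φ - Φstar‖ ^ 2 := by
    intro Φ hΦ
    have hΦ1 : Tendsto (fun k => Φs (k + 1)) atTop (nhds Φstar) :=
      hconv.comp (tendsto_add_atTop_nat 1)
    have hg0 : Tendsto (fun k => G 0 (Φs k)) atTop (nhds (G 0 Φstar)) :=
      ((gcont 0 h0).tendsto Φstar).comp hconv
    have hA : Tendsto (fun k =>
        ⟪G 0 (Φs k), Φs (k + 1) - Φs k⟫ +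
          L 0 / 2 * ‖Φs (k + 1) - Φs k‖ ^ 2 +
          ∑ n ∈ T.erase 0, (⟪Λns n k, Φns n k - Φs (k + 1)⟫ +
            ρ n / 2 * ‖Φns n k - Φs (k + 1)‖ ^ 2)) atTop (nhds 0) := by
      have hA' : Tendsto (fun k =>
          ⟪G 0 (Φs k), Φs (k + 1) - Φs k⟫ +
            L 0 / 2 * ‖Φs (k + 1) - Φs k‖ ^ 2 +
            ∑ n ∈ T.erase 0, (⟪Λns n k, Φns n k - Φs (k + 1)⟫ +
              ρ n / 2 * ‖Φns n k - Φs (k + 1)‖ ^ 2)) atTop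
          (nhds (⟪G 0 Φstar, Φstar - Φstar⟫ +
            L 0 / 2 * ‖Φstar - Φstar‖ ^ 2 +
            ∑ n ∈ T.erase 0, (⟪Λnstar n, Φstar - Φstar⟫ +
              ρ n / 2 * ‖Φstar - Φstar‖ ^ 2))) := by
        refine Tendsto.add (Tendsto.add ?_ ?_) ?_
        · exact hg0.inner (hΦ1.sub hconv)
        · exact tendsto_const_nhds.mul (((hΦ1.sub hconv).norm).pow 2)
        · refine tendsto_finset_sum _ fun n hn => ?_
          have hφn : Tendsto (Φns n) atTop (nhds Φstar) := by
            rw [← heq n hn]; exact hconvn n hn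
          exact ((hconvΛ n hn).inner (hφn.sub hΦ1)).add
            (tendsto_const_nhds.mul (((hφn.sub hΦ1).norm).pow 2))
      simpa using hA'
    have hB : Tendsto (fun k =>
        ⟪G 0 (Φs k), Φ - Φs k⟫ + L 0 / 2 * ‖Φ - Φs k‖ ^ 2 +
          ∑ n ∈ T.erase 0, (⟪Λns n k, Φns n k - Φ⟫ +
            ρ n / 2 * ‖Φns n k - Φ‖ ^ 2)) atTop
        (nhds (⟪G 0 Φstar, Φ - Φstar⟫ + L 0 / 2 * ‖Φ - Φstar‖ ^ 2 +
          ∑ n ∈ T.erase 0, (⟪Λnstar n, Φstar - Φ⟫ +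
            ρ n / 2 * ‖Φstar - Φ‖ ^ 2))) := by
      refine Tendsto.add (Tendsto.add ?_ ?_) ?_
      · exact hg0.inner (tendsto_const_nhds.sub hconv)
      · exact tendsto_const_nhds.mul (((tendsto_const_nhds.sub hconv).norm).pow 2)
      · refine tendsto_finset_sum _ fun n hn => ?_
        have hφn : Tendsto (Φns n) atTop (nhds Φstar) := by
          rw [← heq n hn]; exact hconvn n hn
        exact ((hconvΛ n hn).inner (hφn.sub tendsto_const_nhds)).add
          (tendsto_const_nhds.mul (((hφn.sub tendsto_const_nhds).norm).pow 2))
    have hle := le_of_tendsto_of_tendsto' hA hB (fun k => hmin k Φ hΦ)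
    have hsum : ∑ n ∈ T.erase 0, (⟪Λnstar n, Φstar - Φ⟫ +
          ρ n / 2 * ‖Φstar - Φ‖ ^ 2)
        = ∑ n ∈ T.erase 0, (⟪G n Φstar, Φ - Φstar⟫ +
          ρ n / 2 * ‖Φ - Φstar‖ ^ 2) := by
      refine Finset.sum_congr rfl fun n hn => ?_
      rw [hΛstar n hn, inner_neg_left, ← inner_neg_right, neg_sub, norm_sub_rev]
    rw [hsum] at hle
    have hsplit : ⟪∑ n ∈ T, G n Φstar, Φ - Φstar⟫ + c * ‖Φ - Φstar‖ ^ 2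
        = ⟪G 0 Φstar, Φ - Φstar⟫ + L 0 / 2 * ‖Φ - Φstar‖ ^ 2
          + ∑ n ∈ T.erase 0, (⟪G n Φstar, Φ - Φstar⟫ +
            ρ n / 2 * ‖Φ - Φstar‖ ^ 2) := by
      rw [← Finset.add_sum_erase T (fun n => G n Φstar) h0, inner_add_left,
        sum_inner, Finset.sum_add_distrib, hc, add_mul, Finset.sum_mul]
      ring
    rw [hsplit]
    exact hle
  -- conclude stationarity
  intro Φ hΦ
  set d : FrobSpace N M := Φ - Φstar with hd
  have hstep : ∀ k : ℕ,
      0 ≤ ⟪∑ n ∈ T, G n Φstar, d⟫ + c * (1 / ((k : ℝ) + 1)) * ‖d‖ ^ 2 := by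
    intro k
    set t : ℝ := 1 / ((k : ℝ) + 1) with ht
    have ht0 : 0 < t := by positivity
    have ht1 : t ≤ 1 := by
      rw [ht, div_le_one (by positivity)]
      have : (0 : ℝ) ≤ (k : ℝ) := Nat.cast_nonneg k
      linarith
    have hmem : Φstar + t • d ∈ Cbox N M := by
      intro p
      have h1 := hCstar p
      have h2 := hΦ p
      have happ : (Φstar + t • d) p = Φstar p + t * (Φ p - Φstar p) := by
        simp [hd, PiLp.add_apply, PiLp.smul_apply, PiLp.sub_apply, smul_eq_mul]
      rw [happ]
      constructor
      · nlinarith [mul_nonneg (by linarith : (0:ℝ) ≤ 1 - t) h1.1,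
          mul_nonneg ht0.le h2.1]
      · nlinarith [mul_nonneg (by linarith : (0:ℝ) ≤ 1 - t)
          (by linarith [h1.2] : (0:ℝ) ≤ 2 * π - Φstar p),
          mul_nonneg ht0.le (by linarith [h2.2] : (0:ℝ) ≤ 2 * π - Φ p)]
    have hk := hkey _ hmem
    rw [add_sub_cancel_left, real_inner_smul_right, norm_smul,
      Real.norm_eq_abs, abs_of_pos ht0, mul_pow] at hk
    nlinarith [hk, ht0]
  have hlim : Tendsto (fun k : ℕ =>
      ⟪∑ n ∈ T, G n Φstar, d⟫ + c * (1 / ((k : ℝ) + 1)) * ‖d‖ ^ 2) atTop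
      (nhds (⟪∑ n ∈ T, G n Φstar, d⟫ + c * 0 * ‖d‖ ^ 2)) :=
    tendsto_const_nhds.add
      (((tendsto_const_nhds.mul tendsto_one_div_add_atTop_nhds_zero_nat).mul
        tendsto_const_nhds))
  have hfin := ge_of_tendsto' hlim hstep
  simpa using hfin
end
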